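/- Let W = (Y,X) have law F on 𝒴×𝒳 with Y real and square-integrable, let μ be the law of X, let Γ be a closed linear subspace of L²(μ), and let γ ∈ Γ satisfy the orthogonality condition E_F[ν(X)(Y − γ(X))] = 0 for all ν ∈ Γ. Let α : 𝒳×𝒳 → ℝ be measurable with α(·,x) ∈ Γ and α(x,·) ∈ Γ for every x ∈ 𝒳, and such that α(X_i,X_j)(Y_i − γ(X_i)) and α(X_i,X_j)(Y_j − γ(X_j)) are integrable under F⊗F. Then for any constants c₁, c₂, E_{F⊗F}[ α(X_i,X_j) ( c₁(Y_i − γ(X_i)) + c₂(Y_j − γ(X_j)) ) ] = 0, where (W_i,W_j) are independent copies of W. -/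

import Mathlib

/-!
STATEMENT 14: Global robustness / zero-mean property of the U-statistic first-step
influence function. W = (Y,X) ~ F with Y square-integrable; Γ a (closed) linear
subspace of L²(law of X) containing γ with the orthogonality property
E[ν(X)(Y − γ(X))] = 0 for all ν ∈ Γ. If both sections of α lie in Γ and the relevant
products are integrable under F⊗F, then for any constants c₁, c₂:
E[α(X_i,X_j)(c₁(Y_i − γ(X_i)) + c₂(Y_j − γ(X_j)))] = 0 for independent copies
(W_i, W_j) ~ F⊗F (modelled on the product space (ℝ × 𝒳) × (ℝ × 𝒳)).
-/

open MeasureTheory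

theorem global_robustness_of_UFSIF
    {𝒳 : Type*} [MeasurableSpace 𝒳]
    (F : Measure (ℝ × 𝒳)) [IsProbabilityMeasure F]
    (Γ : Set (𝒳 → ℝ))
    (hΓ_zero : (fun _ => (0:ℝ)) ∈ Γ)
    (hΓ_add : ∀ f ∈ Γ, ∀ g ∈ Γ, (fun x => f x + g x) ∈ Γ)
    (hΓ_smul : ∀ (c : ℝ), ∀ f ∈ Γ, (fun x => c * f x) ∈ Γ)
    (hΓ_L2 : ∀ f ∈ Γ, MemLp (fun w : ℝ × 𝒳 => f w.2) 2 F)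
    (hY_L2 : MemLp (fun w : ℝ × 𝒳 => w.1) 2 F)
    (γ : 𝒳 → ℝ) (hγΓ : γ ∈ Γ)
    (horth : ∀ ν ∈ Γ, (∫ w : ℝ × 𝒳, ν w.2 * (w.1 - γ w.2) ∂F) = 0)
    (α : 𝒳 → 𝒳 → ℝ)
    (hα_sec₁ : ∀ x, (fun x' => α x' x) ∈ Γ)
    (hα_sec₂ : ∀ x, (fun x' => α x x') ∈ Γ)
    (hint₁ : Integrable
      (fun p : (ℝ × 𝒳) × (ℝ × 𝒳) => α p.1.2 p.2.2 * (p.1.1 - γ p.1.2)) (F.prod F))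
    (hint₂ : Integrable
      (fun p : (ℝ × 𝒳) × (ℝ × 𝒳) => α p.1.2 p.2.2 * (p.2.1 - γ p.2.2)) (F.prod F))
    (c₁ c₂ : ℝ) :
    (∫ p : (ℝ × 𝒳) × (ℝ × 𝒳),
        α p.1.2 p.2.2 * (c₁ * (p.1.1 - γ p.1.2) + c₂ * (p.2.1 - γ p.2.2))
        ∂(F.prod F)) = 0 := by
  have h1 : (∫ p : (ℝ × 𝒳) × (ℝ × 𝒳),
      α p.1.2 p.2.2 * (p.1.1 - γ p.1.2) ∂(F.prod F)) = 0 := by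
    rw [MeasureTheory.integral_prod_symm _ hint₁]
    have : ∀ y : ℝ × 𝒳, (∫ x : ℝ × 𝒳, α x.2 y.2 * (x.1 - γ x.2) ∂F) = 0 := by
      intro y
      exact horth (fun x' => α x' y.2) (hα_sec₁ y.2)
    simp [this]
  have h2 : (∫ p : (ℝ × 𝒳) × (ℝ × 𝒳),
      α p.1.2 p.2.2 * (p.2.1 - γ p.2.2) ∂(F.prod F)) = 0 := by
    rw [MeasureTheory.integral_prod _ hint₂]
    have : ∀ x : ℝ × 𝒳, (∫ y : ℝ × 𝒳, α x.2 y.2 * (y.1 - γ y.2) ∂F) = 0 := by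
      intro x
      exact horth (fun x' => α x.2 x') (hα_sec₂ x.2)
    simp [this]
  have heq : (fun p : (ℝ × 𝒳) × (ℝ × 𝒳) =>
      α p.1.2 p.2.2 * (c₁ * (p.1.1 - γ p.1.2) + c₂ * (p.2.1 - γ p.2.2)))
      = fun p => c₁ * (α p.1.2 p.2.2 * (p.1.1 - γ p.1.2))
          + c₂ * (α p.1.2 p.2.2 * (p.2.1 - γ p.2.2)) := by
    funext p; ring
  rw [heq, MeasureTheory.integral_add (hint₁.const_mul c₁) (hint₂.const_mul c₂),
    MeasureTheory.integral_const_mul, MeasureTheory.integral_const_mul, h1, h2]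
  ring
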